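/- For every k ∈ {1,…,d}, the polynomial z_k² − 1 belongs to the ideal of ℝ[z₁,…,z_d] generated by the polynomials q_Θ, where Θ ranges over all d×d integer matrices each of whose columns is a 0-1 vector with exactly one or exactly two entries equal to 1, such that det Θ = ±1 and at least one column of Θ equals the k-th standard unit vector e_k. -/

import Mathlib

open MvPolynomial

/-- For a `d×d` integer matrix `Θ` with 0-1 columns, the polynomial
`q_Θ(z) = ∏_{columns θ of Θ} (1 + z^θ)/2`, where `z^θ = z₁^{θ₁}⋯z_d^{θ_d}`. -/
noncomputable def qpoly {d : ℕ} (Θ : Matrix (Fin d) (Fin d) ℤ) : MvPolynomial (Fin d) ℝ :=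
  ∏ c : Fin d, (C (1 / 2 : ℝ) * (1 + ∏ i : Fin d, X i ^ (Θ i c).toNat))

namespace Stmt2Aux

variable {d : ℕ}

/-- rank function making `k` the biggest index -/
def rk (k : Fin d) (c : Fin d) : ℕ := if c = k then d else c.val

lemma rk_inj (k : Fin d) : Function.Injective (rk k) := by
  intro a b hab
  unfold rk at hab
  split_ifs at hab with h1 h2 h2
  · rw [h1, h2]
  · exact absurd hab (by have := b.isLt; omega)
  · exact absurd hab (by have := a.isLt; omega)
  · exact Fin.ext hab

/-- the 0-1 matrix whose column `c` is `e_c` (if `w c = c`) or `e_c + e_{w c}`. -/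
def Mw (w : Fin d → Fin d) : Matrix (Fin d) (Fin d) ℤ :=
  fun i c => (if i = c then 1 else 0) + (if w c ≠ c ∧ i = w c then 1 else 0)

/-- admissibility of `w`: fixes `k`, and otherwise strictly increases rank -/
def Adm (k : Fin d) (w : Fin d → Fin d) : Prop :=
  w k = k ∧ ∀ c, w c = c ∨ rk k c < rk k (w c)

/-- the factor polynomial of column `c` -/
noncomputable def Fp (w : Fin d → Fin d) (c : Fin d) : MvPolynomial (Fin d) ℝ :=
  1 + X c * (if w c = c then 1 else X (w c))

lemma det_eq_one_aux {ι : Type*} [Fintype ι] [DecidableEq ι] (M : Matrix ι ι ℤ) (b : ι → ℕ)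
    (hinj : Function.Injective b) (hz : ∀ i j, b i < b j → M i j = 0)
    (hd : ∀ i, M i i = 1) : M.det = 1 := by
  have hbt : M.BlockTriangular (OrderDual.toDual ∘ b) := by
    intro i j h
    exact hz i j h
  rw [hbt.det]
  apply Finset.prod_eq_one
  intro a ha
  obtain ⟨i, -, hi⟩ := Finset.mem_image.mp ha
  haveI : Unique {x // (OrderDual.toDual ∘ b) x = a} :=
    { default := ⟨i, hi⟩
      uniq := by
        rintro ⟨j, hj⟩
        apply Subtype.ext
        apply hinj
        have : (OrderDual.toDual ∘ b) j = (OrderDual.toDual ∘ b) i := hj.trans hi.symm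
        exact congrArg OrderDual.ofDual this }
  rw [Matrix.det_unique]
  exact hd _


variable {k : Fin d} {w : Fin d → Fin d}

lemma Mw_entries (w : Fin d → Fin d) (i c : Fin d) : Mw w i c = 0 ∨ Mw w i c = 1 := by
  unfold Mw
  split_ifs with h1 h2 h2
  · exact absurd (h2.2.symm.trans h1) h2.1
  · right; ring
  · right; ring
  · left; ring

lemma Mw_colsum (w : Fin d → Fin d) (c : Fin d) :
    (∑ i, Mw w i c) = 1 ∨ (∑ i, Mw w i c) = 2 := by
  unfold Mw
  rw [Finset.sum_add_distrib]
  rw [Finset.sum_ite_eq' Finset.univ c (fun _ => (1:ℤ))]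
  by_cases h : w c = c
  · left
    simp [h]
  · right
    have : ∀ i, (if w c ≠ c ∧ i = w c then (1:ℤ) else 0) = (if i = w c then 1 else 0) := by
      intro i; simp [h]
    rw [Finset.sum_congr rfl (fun i _ => this i)]
    rw [Finset.sum_ite_eq' Finset.univ (w c) (fun _ => (1:ℤ))]
    simp

lemma Mw_col_k (hw : Adm k w) : ∀ i, Mw w i k = if i = k then 1 else 0 := by
  intro i
  have h2 : ¬(w k ≠ k ∧ i = w k) := by
    rintro ⟨hne, -⟩; exact hne hw.1
  simp only [Mw, if_neg h2, add_zero]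

lemma Mw_det (hw : Adm k w) : (Mw w).det = 1 := by
  apply det_eq_one_aux _ (rk k) (rk_inj k)
  · intro i j hij
    have h1 : ¬ i = j := by rintro rfl; exact lt_irrefl _ hij
    have h2 : ¬(w j ≠ j ∧ i = w j) := by
      rintro ⟨hne, hh⟩
      rcases hw.2 j with hc | hc
      · exact hne hc
      · rw [hh] at hij; omega
    simp only [Mw, if_neg h1, if_neg h2, add_zero]
  · intro i
    have h2 : ¬(w i ≠ i ∧ i = w i) := by rintro ⟨hne, hh⟩; exact hne hh.symm
    simp [Mw, if_pos rfl, if_neg h2]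

lemma qpoly_Mw (w : Fin d → Fin d) :
    qpoly (Mw w) = (C (1/2 : ℝ))^d * ∏ c, Fp w c := by
  unfold qpoly
  have hcol : ∀ c, (∏ i, X i ^ (Mw w i c).toNat : MvPolynomial (Fin d) ℝ)
      = X c * (if w c = c then 1 else X (w c)) := by
    intro c
    by_cases h : w c = c
    · rw [if_pos h]
      have hthis : ∀ i, (X i ^ (Mw w i c).toNat : MvPolynomial (Fin d) ℝ)
          = if i = c then X i else 1 := by
        intro i
        have h2 : ¬(w c ≠ c ∧ i = w c) := by rintro ⟨hne, -⟩; exact hne h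
        by_cases h1 : i = c
        · simp [Mw, if_pos h1, if_neg h2]
        · simp [Mw, if_neg h1, if_neg h2]
      rw [Finset.prod_congr rfl (fun i _ => hthis i), Finset.prod_ite_eq' Finset.univ c X]
      simp
    · rw [if_neg h]
      have hsub : ({c, w c} : Finset (Fin d)) ⊆ Finset.univ := Finset.subset_univ _
      have hne : c ≠ w c := fun hcc => h hcc.symm
      rw [← Finset.prod_subset hsub]
      · rw [Finset.prod_pair hne]
        have h1 : (Mw w c c).toNat = 1 := by
          have h2 : ¬(w c ≠ c ∧ c = w c) := by rintro ⟨-, hh⟩; exact h hh.symm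
          simp [Mw, if_pos rfl, if_neg h2]
        have h2 : (Mw w (w c) c).toNat = 1 := by
          have h3 : ¬((w c : Fin d) = c) := h
          simp [Mw, if_neg (show ¬ w c = c from h), if_pos (show w c ≠ c ∧ w c = w c from ⟨h, rfl⟩)]
        rw [h1, h2, pow_one, pow_one]
      · intro i _ hi
        have hic : ¬ i = c := by intro hh; exact hi (by simp [hh])
        have hiw : ¬(w c ≠ c ∧ i = w c) := by
          rintro ⟨-, hh⟩; exact hi (by simp [hh])
        have hz : (Mw w i c).toNat = 0 := by simp [Mw, if_neg hic, if_neg hiw]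
        rw [hz, pow_zero]
  calc ∏ c : Fin d, (C (1 / 2 : ℝ) * (1 + ∏ i : Fin d, X i ^ (Mw w i c).toNat))
      = ∏ c : Fin d, (C (1 / 2 : ℝ) * Fp w c) := by
        apply Finset.prod_congr rfl
        intro c _
        rw [hcol c]
        rfl
    _ = (C (1/2 : ℝ))^d * ∏ c, Fp w c := by
        rw [Finset.prod_mul_distrib, Finset.prod_const, Finset.card_univ, Fintype.card_fin]

lemma main_lemma (k : Fin d) (J : Ideal (MvPolynomial (Fin d) ℝ))
    (hgen : ∀ w : Fin d → Fin d, Adm k w → (∏ c, Fp w c) ∈ J) :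
    ∀ (n : ℕ) (T : Finset (Fin d)), T.card = n → T.Nonempty → k ∉ T →
      ∀ w : Fin d → Fin d, Adm k w → (∀ t ∈ T, w t = t) →
      (2 : MvPolynomial (Fin d) ℝ)^(n-1) * ((X k - 1) * ∏ c ∈ Tᶜ, Fp w c) ∈ J := by
  intro n
  induction n with
  | zero => intro T hcard hne; exact absurd (Finset.card_eq_zero.mp hcard) hne.ne_empty
  | succ m ih =>
    intro T hcard hne hkT w hw hwT
    rcases Nat.eq_zero_or_pos m with rfl | hm
    · -- base: card T = 1
      obtain ⟨a, rfl⟩ := Finset.card_eq_one.mp hcard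
      have hak : a ≠ k := by rintro rfl; exact hkT (Finset.mem_singleton_self a)
      have hwa : w a = a := hwT a (Finset.mem_singleton_self a)
      set Q := ∏ c ∈ ({a} : Finset (Fin d))ᶜ, Fp w c with hQ
      have hP0 : (∏ c, Fp w c) ∈ J := hgen w hw
      have hw' : Adm k (Function.update w a k) := by
        constructor
        · rw [Function.update_of_ne (Ne.symm hak), hw.1]
        · intro c
          by_cases hc : c = a
          · subst hc
            right
            rw [Function.update_self]
            unfold rk
            rw [if_neg hak, if_pos rfl]
            exact c.isLt
          · rw [Function.update_of_ne hc]; exact hw.2 c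
      have hP1 : (∏ c, Fp (Function.update w a k) c) ∈ J := hgen _ hw'
      have e0 : (∏ c, Fp w c) = (1 + X a * 1) * Q := by
        rw [hQ, Finset.compl_singleton,
          ← Finset.mul_prod_erase Finset.univ _ (Finset.mem_univ a)]
        congr 1
        simp [Fp, hwa]
      have e1 : (∏ c, Fp (Function.update w a k) c) = (1 + X a * X k) * Q := by
        rw [hQ, Finset.compl_singleton,
          ← Finset.mul_prod_erase Finset.univ _ (Finset.mem_univ a)]
        congr 1
        · simp [Fp, Function.update_self, Ne.symm hak]
        · apply Finset.prod_congr rfl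
          intro c hc
          have hca : c ≠ a := (Finset.mem_erase.mp hc).1
          simp [Fp, Function.update_of_ne hca]
      rw [e0] at hP0; rw [e1] at hP1
      have hkey : (2 : MvPolynomial (Fin d) ℝ)^(0+1-1) * ((X k - 1) * Q)
          = X k * ((1 + X a * 1) * Q) - (1 + X a * X k) * Q := by
        norm_num; ring
      rw [hkey]
      exact J.sub_mem (J.mul_mem_left _ hP0) hP1
    · -- step
      obtain ⟨m', rfl⟩ : ∃ m', m = m' + 1 := ⟨m - 1, by omega⟩
      have h2card : 1 < T.card := by omega
      have ha : T.min' hne ∈ T := T.min'_mem hne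
      set a := T.min' hne with hadef
      obtain ⟨b, hbT, hba⟩ := Finset.exists_mem_ne h2card a
      have hab : a < b := lt_of_le_of_ne (T.min'_le b hbT) (Ne.symm hba)
      have hak : a ≠ k := by rintro rfl; exact hkT ha
      have hbk : b ≠ k := by rintro rfl; exact hkT hbT
      have hrab : rk k a < rk k b := by
        unfold rk; rw [if_neg hak, if_neg hbk]; exact hab
      have hT₁card : (T.erase a).card = m' + 1 := by
        rw [Finset.card_erase_of_mem ha]; omega
      have hT₂card : (T.erase b).card = m' + 1 := by
        rw [Finset.card_erase_of_mem hbT]; omega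
      have hbT₁ : b ∈ T.erase a := Finset.mem_erase.mpr ⟨hba, hbT⟩
      have haT₂ : a ∈ T.erase b := Finset.mem_erase.mpr ⟨Ne.symm hba, ha⟩
      have hkT₁ : k ∉ T.erase a := fun h => hkT (Finset.mem_of_mem_erase h)
      have hkT₂ : k ∉ T.erase b := fun h => hkT (Finset.mem_of_mem_erase h)
      have hww : Adm k (Function.update w a b) := by
        constructor
        · rw [Function.update_of_ne (Ne.symm hak), hw.1]
        · intro c
          by_cases hc : c = a
          · subst hc; right; rw [Function.update_self]; exact hrab
          · rw [Function.update_of_ne hc]; exact hw.2 c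
      have h1 := ih (T.erase a) hT₁card ⟨b, hbT₁⟩ hkT₁ w hw
        (fun t ht => hwT t (Finset.mem_of_mem_erase ht))
      have h2 := ih (T.erase a) hT₁card ⟨b, hbT₁⟩ hkT₁ (Function.update w a b) hww
        (fun t ht => by
          rw [Function.update_of_ne (Finset.mem_erase.mp ht).1]
          exact hwT t (Finset.mem_of_mem_erase ht))
      have h3 := ih (T.erase b) hT₂card ⟨a, haT₂⟩ hkT₂ w hw
        (fun t ht => hwT t (Finset.mem_of_mem_erase ht))
      set Q := ∏ c ∈ Tᶜ, Fp w c with hQ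
      have haTc : a ∉ Tᶜ := by simp [ha]
      have hbTc : b ∉ Tᶜ := by simp [hbT]
      have p1 : ∏ c ∈ (T.erase a)ᶜ, Fp w c = (1 + X a * 1) * Q := by
        rw [Finset.compl_erase, Finset.prod_insert haTc]
        congr 1
        simp [Fp, hwT a ha]
      have p2 : ∏ c ∈ (T.erase a)ᶜ, Fp (Function.update w a b) c
          = (1 + X a * X b) * Q := by
        rw [Finset.compl_erase, Finset.prod_insert haTc]
        refine congrArg₂ (· * ·) ?_ ?_
        · simp [Fp, Function.update_self, hba]
        · apply Finset.prod_congr rfl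
          intro c hc
          have hca : c ≠ a := by rintro rfl; exact haTc hc
          simp [Fp, Function.update_of_ne hca]
      have p3 : ∏ c ∈ (T.erase b)ᶜ, Fp w c = (1 + X b * 1) * Q := by
        rw [Finset.compl_erase, Finset.prod_insert hbTc]
        congr 1
        simp [Fp, hwT b hbT]
      rw [p1] at h1; rw [p2] at h2; rw [p3] at h3
      have hkey : (2:MvPolynomial (Fin d) ℝ)^(m'+1+1-1) * ((X k - 1) * Q)
          = ((2:MvPolynomial (Fin d) ℝ)^(m'+1-1) * ((X k - 1) * ((1 + X a * X b) * Q))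
            + (2:MvPolynomial (Fin d) ℝ)^(m'+1-1) * ((X k - 1) * ((1 + X b * 1) * Q)))
            - X b * ((2:MvPolynomial (Fin d) ℝ)^(m'+1-1) * ((X k - 1) * ((1 + X a * 1) * Q))) := by
        simp only [Nat.add_sub_cancel]
        ring
      rw [hkey]
      exact J.sub_mem (J.add_mem h2 h3) (J.mul_mem_left _ h1)

end Stmt2Aux


/-- For every `k`, the polynomial `z_k² − 1` lies in the ideal generated by the `q_Θ`
where `Θ` ranges over `d×d` integer matrices whose columns are 0-1 vectors with exactly
one or two ones, with `det Θ = ±1`, and having `e_k` among their columns. -/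
theorem stmt_2 (d : ℕ) (k : Fin d) :
    (X k ^ 2 - 1 : MvPolynomial (Fin d) ℝ) ∈ Ideal.span
      {q : MvPolynomial (Fin d) ℝ | ∃ Θ : Matrix (Fin d) (Fin d) ℤ,
        (∀ i c, Θ i c = 0 ∨ Θ i c = 1) ∧
        (∀ c, (∑ i, Θ i c) = 1 ∨ (∑ i, Θ i c) = 2) ∧
        (Θ.det = 1 ∨ Θ.det = -1) ∧
        (∃ c, ∀ i, Θ i c = if i = k then 1 else 0) ∧
        q = qpoly Θ} := by
  open Stmt2Aux in
  set S : Set (MvPolynomial (Fin d) ℝ) :=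
      {q : MvPolynomial (Fin d) ℝ | ∃ Θ : Matrix (Fin d) (Fin d) ℤ,
        (∀ i c, Θ i c = 0 ∨ Θ i c = 1) ∧
        (∀ c, (∑ i, Θ i c) = 1 ∨ (∑ i, Θ i c) = 2) ∧
        (Θ.det = 1 ∨ Θ.det = -1) ∧
        (∃ c, ∀ i, Θ i c = if i = k then 1 else 0) ∧
        q = qpoly Θ} with hS
  have hgen : ∀ w : Fin d → Fin d, Adm k w → (∏ c, Fp w c) ∈ Ideal.span S := by
    intro w hw
    have hq : qpoly (Mw w) ∈ S :=
      ⟨Mw w, Mw_entries w, Mw_colsum w, Or.inl (Mw_det hw), ⟨k, Mw_col_k hw⟩, rfl⟩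
    have h1 : (∏ c, Fp w c) = (C (2:ℝ))^d * qpoly (Mw w) := by
      rw [qpoly_Mw, ← mul_assoc, ← mul_pow, ← C_mul]
      norm_num
    rw [h1]
    exact Ideal.mul_mem_left _ _ (Ideal.subset_span hq)
  by_cases hd : 1 < d
  · -- main case
    have hcardT : (Finset.univ.erase k).card = d - 1 := by
      rw [Finset.card_erase_of_mem (Finset.mem_univ k), Finset.card_univ, Fintype.card_fin]
    have hTne : (Finset.univ.erase k).Nonempty := by
      rw [← Finset.card_pos, hcardT]; omega
    have hAdmId : Adm k (id : Fin d → Fin d) := ⟨rfl, fun c => Or.inl rfl⟩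
    have main := main_lemma k (Ideal.span S) hgen (d - 1) (Finset.univ.erase k)
      hcardT hTne (Finset.notMem_erase k _) id hAdmId (fun t _ => rfl)
    have hTc : (Finset.univ.erase k)ᶜ = {k} := by
      rw [Finset.compl_erase]
      simp
    have hprod : ∏ c ∈ (Finset.univ.erase k)ᶜ, Fp (id : Fin d → Fin d) c
        = 1 + X k * 1 := by
      rw [hTc, Finset.prod_singleton]
      simp [Fp]
    rw [hprod] at main
    have hC : (C ((1/2:ℝ)))^(d-1-1) * (2 : MvPolynomial (Fin d) ℝ)^(d-1-1) = 1 := by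
      rw [show (2 : MvPolynomial (Fin d) ℝ) = C 2 from (map_ofNat C 2).symm,
        ← mul_pow, ← C_mul]
      norm_num
    have hfin : (X k ^ 2 - 1 : MvPolynomial (Fin d) ℝ)
        = (C ((1/2:ℝ)))^(d-1-1) * ((2 : MvPolynomial (Fin d) ℝ)^(d-1-1)
            * ((X k - 1) * (1 + X k * 1))) := by
      rw [← mul_assoc, hC, one_mul]; ring
    rw [hfin]
    exact Ideal.mul_mem_left _ _ main
  · -- d = 1
    have hd1 : d = 1 := by have := k.pos; omega
    have hAdmId : Adm k (id : Fin d → Fin d) := ⟨rfl, fun c => Or.inl rfl⟩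
    have hP := hgen id hAdmId
    have hempty : Finset.univ.erase k = (∅ : Finset (Fin d)) := by
      apply Finset.card_eq_zero.mp
      rw [Finset.card_erase_of_mem (Finset.mem_univ k), Finset.card_univ, Fintype.card_fin]
      omega
    have e : (∏ c, Fp (id : Fin d → Fin d) c) = 1 + X k * 1 := by
      rw [← Finset.mul_prod_erase Finset.univ _ (Finset.mem_univ k), hempty,
        Finset.prod_empty, mul_one]
      simp [Fp]
    rw [e] at hP
    have hfin : (X k ^ 2 - 1 : MvPolynomial (Fin d) ℝ)
        = (X k - 1) * (1 + X k * 1) := by ring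
    rw [hfin]
    exact Ideal.mul_mem_left _ _ hP
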